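/- Let n ≥ 1, let L̃ ∈ ℝ^{n×n} be symmetric with eigendecomposition L̃ = U diag(λ) Uᵀ, where U is orthogonal and the entries of λ ∈ ℝⁿ are pairwise distinct. Let ρ ∈ ℝ, v ∈ ℝⁿ, set z = Uᵀv and assume every entry of z is nonzero. Let L = L̃ + ρ v vᵀ have eigendecomposition L = X diag(μ) Xᵀ with X orthogonal, where the entries of μ ∈ ℝⁿ are pairwise distinct and {μ_1,…,μ_n} ∩ {λ_1,…,λ_n} = ∅. Then there exists a vector a ∈ ℝⁿ such that X = U diag(z) C(λ,μ) diag(a), and for this same a one has Xᵀ = − diag(a) C(μ,λ) diag(z) Uᵀ. -/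
import Mathlib


open Matrix Real

/-- Cauchy matrix `C(μ, λ)` with entries `1 / (μ_i − λ_j)`. -/
noncomputable def cauchyMatrix {n : ℕ} (μ lam : Fin n → ℝ) : Matrix (Fin n) (Fin n) ℝ :=
  Matrix.of fun i j => 1 / (μ i - lam j)

/-- For a symmetric matrix `L̃ = U diag(λ) Uᵀ` with distinct eigenvalues and a
rank-one update `L = L̃ + ρ v vᵀ = X diag(μ) Xᵀ` with distinct eigenvalues disjoint from `λ`,
if `z = Uᵀ v` has no zero entries, then `X = U diag(z) C(λ, μ) diag(a)` and
`Xᵀ = − diag(a) C(μ, λ) diag(z) Uᵀ` for some vector `a`. -/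
theorem stmt0 (n : ℕ) (hn : 1 ≤ n)
    (Lt L U X : Matrix (Fin n) (Fin n) ℝ)
    (lam mu v z : Fin n → ℝ) (ρ : ℝ)
    (hLt_symm : Lt.IsSymm)
    (hLt_dec : Lt = U * Matrix.diagonal lam * Uᵀ)
    (hU_orth : U * Uᵀ = 1)
    (hlam_distinct : Function.Injective lam)
    (hz : z = Uᵀ *ᵥ v)
    (hz_ne : ∀ i, z i ≠ 0)
    (hL : L = Lt + ρ • Matrix.vecMulVec v v)
    (hL_dec : L = X * Matrix.diagonal mu * Xᵀ)
    (hX_orth : X * Xᵀ = 1)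
    (hmu_distinct : Function.Injective mu)
    (hdisj : ∀ i j, mu i ≠ lam j) :
    ∃ a : Fin n → ℝ,
      X = U * Matrix.diagonal z * cauchyMatrix lam mu * Matrix.diagonal a ∧
      Xᵀ = -(Matrix.diagonal a * cauchyMatrix mu lam * Matrix.diagonal z * Uᵀ) := by
  have hUtU : Uᵀ * U = 1 := mul_eq_one_comm.mp hU_orth
  have hXtX : Xᵀ * X = 1 := mul_eq_one_comm.mp hX_orth
  set W : Matrix (Fin n) (Fin n) ℝ := Uᵀ * X with hW
  have hXUW : X = U * W := by
    rw [hW, ← Matrix.mul_assoc, hU_orth, Matrix.one_mul]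
  have hvU : v ᵥ* U = z := by rw [hz, Matrix.mulVec_transpose]
  have hvX : v ᵥ* X = z ᵥ* W := by
    rw [hXUW, ← Matrix.vecMul_vecMul, hvU]
  have h0 : X * Matrix.diagonal mu * Xᵀ
      = U * Matrix.diagonal lam * Uᵀ + ρ • Matrix.vecMulVec v v := by
    rw [← hL_dec, hL, hLt_dec]
  have hmid : Uᵀ * (ρ • Matrix.vecMulVec v v) * X
      = ρ • Matrix.vecMulVec z (z ᵥ* W) := by
    ext i j
    have hzi : z i = ∑ k, Uᵀ i k * v k := by
      rw [hz]; simp [Matrix.mulVec, dotProduct]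
    have hvXj : (z ᵥ* W) j = ∑ l, v l * X l j := by
      rw [← hvX]; simp [Matrix.vecMul, dotProduct]
    simp only [Matrix.mul_apply, Matrix.smul_apply, Matrix.vecMulVec_apply,
      smul_eq_mul, hzi, hvXj, Finset.mul_sum, Finset.sum_mul]
    apply Finset.sum_congr rfl
    intro l _
    apply Finset.sum_congr rfl
    intro k _
    ring
  have hE : W * Matrix.diagonal mu = Matrix.diagonal lam * W
      + ρ • Matrix.vecMulVec z (z ᵥ* W) := by
    have h1 : Uᵀ * (X * Matrix.diagonal mu * Xᵀ) * X
        = Uᵀ * (U * Matrix.diagonal lam * Uᵀ + ρ • Matrix.vecMulVec v v) * X := by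
      rw [h0]
    calc W * Matrix.diagonal mu
        = Uᵀ * X * Matrix.diagonal mu * (Xᵀ * X) := by
          rw [hXtX, Matrix.mul_one, hW]
      _ = Uᵀ * (X * Matrix.diagonal mu * Xᵀ) * X := by
          simp only [Matrix.mul_assoc]
      _ = Uᵀ * (U * Matrix.diagonal lam * Uᵀ + ρ • Matrix.vecMulVec v v) * X := h1
      _ = Uᵀ * (U * Matrix.diagonal lam * Uᵀ) * X
            + Uᵀ * (ρ • Matrix.vecMulVec v v) * X := by
          rw [Matrix.mul_add, Matrix.add_mul]
      _ = Matrix.diagonal lam * W + ρ • Matrix.vecMulVec z (z ᵥ* W) := by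
          rw [hmid, hW]
          congr 1
          rw [← Matrix.mul_assoc, ← Matrix.mul_assoc, hUtU, Matrix.one_mul,
            Matrix.mul_assoc]
  have key : ∀ i j, W i j * mu j = lam i * W i j + ρ * (z i * (z ᵥ* W) j) := by
    intro i j
    have := congrFun (congrFun hE i) j
    simpa [Matrix.mul_diagonal, Matrix.diagonal_mul,
      Matrix.add_apply, Matrix.smul_apply, Matrix.vecMulVec_apply, mul_assoc]
      using this
  set a : Fin n → ℝ := fun j => -ρ * (z ᵥ* W) j with ha
  have hWentry : ∀ i j, W i j = z i * (1 / (lam i - mu j)) * a j := by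
    intro i j
    have hne : lam i - mu j ≠ 0 := sub_ne_zero.mpr (Ne.symm (hdisj j i))
    have h := key i j
    rw [ha]
    field_simp
    nlinarith [h]
  have hWmat : W = Matrix.diagonal z * cauchyMatrix lam mu * Matrix.diagonal a := by
    ext i j
    rw [Matrix.mul_diagonal, Matrix.diagonal_mul, hWentry i j]
    simp [cauchyMatrix]
  have h1 : X = U * Matrix.diagonal z * cauchyMatrix lam mu * Matrix.diagonal a := by
    rw [hXUW, hWmat, ← Matrix.mul_assoc, ← Matrix.mul_assoc]
  have hCt : (cauchyMatrix lam mu)ᵀ = -(cauchyMatrix mu lam) := by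
    ext i j
    simp only [Matrix.transpose_apply, Matrix.neg_apply, cauchyMatrix, Matrix.of_apply]
    rw [show lam j - mu i = -(mu i - lam j) by ring, div_neg]
  refine ⟨a, h1, ?_⟩
  rw [h1]
  simp only [Matrix.transpose_mul, Matrix.diagonal_transpose, hCt, Matrix.mul_neg,
    Matrix.neg_mul, Matrix.mul_assoc]
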